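/- Let p be an odd prime and x₁, x₂, x₃ ∈ F_p satisfy x₃ + x₂ = 0 and x₃ ≠ x₁. Then the kernel K₁(x₁,x₂,x₃) = p^{-3} ∑_{y₁,y₂,y₃ ∈ F_p} e_p(x₁y₁² − x₂y₂² − x₃y₃² + (x₃+x₂−x₁)(y₂+y₃−y₁)² + (x₂−x₁)(y₁−y₃)) satisfies |K₁(x₁,x₂,x₃)| ≤ p^{-1}. -/

import Mathlib

open Finset Complex

/-- `e_p(x) = exp(-2πi x / p)` via the canonical lift `x.val`. -/
noncomputable def ep (p : ℕ) (x : ZMod p) : ℂ :=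
  Complex.exp (-2 * Real.pi * Complex.I * (x.val : ℂ) / p)

/-- Normalized quadratic Gauss sum kernel `K(a,b) = (1/p) ∑_y e_p(a y² + b y)`. -/
noncomputable def Kker (p : ℕ) [NeZero p] (a b : ZMod p) : ℂ :=
  (p : ℂ)⁻¹ * ∑ y : ZMod p, ep p (a * y ^ 2 + b * y)

/-- The kernel `K₁(x₁,x₂,x₃) = p^{-3} ∑_{y₁,y₂,y₃} e_p(R₁)`. -/
noncomputable def K1 (p : ℕ) [NeZero p] (x₁ x₂ x₃ : ZMod p) : ℂ :=
  ((p : ℂ) ^ 3)⁻¹ * ∑ y₁ : ZMod p, ∑ y₂ : ZMod p, ∑ y₃ : ZMod p,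
    ep p (x₁ * y₁ ^ 2 - x₂ * y₂ ^ 2 - x₃ * y₃ ^ 2 +
      (x₃ + x₂ - x₁) * (y₂ + y₃ - y₁) ^ 2 + (x₂ - x₁) * (y₁ - y₃))

lemma ep_intCast (p : ℕ) [NeZero p] (n : ℤ) :
    ep p ((n : ZMod p)) = Complex.exp (-2 * Real.pi * Complex.I * (n : ℂ) / p) := by
  have hp : (p : ℂ) ≠ 0 := Nat.cast_ne_zero.mpr (NeZero.ne p)
  set x : ZMod p := (n : ZMod p)
  have hx : ((x.val : ℤ) : ZMod p) = (n : ZMod p) := by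
    simp [x, ZMod.natCast_val, ZMod.intCast_zmod_cast]
  rw [ZMod.intCast_eq_intCast_iff] at hx
  obtain ⟨k, hk⟩ := hx.dvd
  have hn : (n : ℂ) = (x.val : ℂ) + p * k := by
    have h2 : (n : ℤ) = x.val + p * k := by linarith
    exact_mod_cast congrArg (Int.cast : ℤ → ℂ) h2
  rw [ep, hn]
  rw [show -2 * (Real.pi:ℂ) * Complex.I * ((x.val:ℂ) + p * k) / p
      = -2 * (Real.pi:ℂ) * Complex.I * (x.val:ℂ) / p
        + ((-k : ℤ) : ℂ) * (2 * (Real.pi:ℂ) * Complex.I) by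
    push_cast; field_simp; ring]
  rw [Complex.exp_add, Complex.exp_int_mul_two_pi_mul_I, mul_one]

lemma ep_add (p : ℕ) [NeZero p] (a b : ZMod p) : ep p (a + b) = ep p a * ep p b := by
  have hp : (p : ℂ) ≠ 0 := Nat.cast_ne_zero.mpr (NeZero.ne p)
  have ha : a = ((a.val : ℤ) : ZMod p) := by simp [ZMod.natCast_val, ZMod.intCast_zmod_cast]
  have hb : b = ((b.val : ℤ) : ZMod p) := by simp [ZMod.natCast_val, ZMod.intCast_zmod_cast]
  rw [ha, hb, ← Int.cast_add, ep_intCast, ep_intCast, ep_intCast, ← Complex.exp_add]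
  congr 1
  push_cast
  field_simp
  ring

lemma ep_zero (p : ℕ) [NeZero p] : ep p 0 = 1 := by
  simp [ep]

lemma abs_ep (p : ℕ) (x : ZMod p) : ‖ep p x‖ = 1 := by
  have h : (-2 * (Real.pi:ℂ) * Complex.I * (x.val : ℂ) / p)
      = ((-2 * Real.pi * (x.val:ℝ) / p : ℝ) : ℂ) * Complex.I := by push_cast; ring
  rw [ep, h, Complex.norm_exp_ofReal_mul_I]

lemma ep_one_ne_one (p : ℕ) [Fact p.Prime] : ep p 1 ≠ 1 := by
  have hp2 : 2 ≤ p := (Fact.out : p.Prime).two_le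
  haveI : Fact (1 < p) := ⟨hp2⟩
  have hpC : (p : ℂ) ≠ 0 := Nat.cast_ne_zero.mpr (by omega)
  intro hcontra
  rw [ep, ZMod.val_one, Complex.exp_eq_one_iff] at hcontra
  obtain ⟨n, hn⟩ := hcontra
  have h1 : (-1 : ℂ) = n * p := by
    field_simp at hn
    have h2 : (-1 : ℂ) * (2 * Real.pi * Complex.I) = (n * p) * (2 * Real.pi * Complex.I) := by
      linear_combination (2 * (Real.pi:ℂ) * Complex.I) * hn
    exact mul_right_cancel₀ (by simp [Real.pi_ne_zero, Complex.I_ne_zero]) h2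
  have h2 : (-1 : ℤ) = n * p := by exact_mod_cast h1
  have h3 : (p : ℤ) ∣ 1 := ⟨-n, by linarith⟩
  have := Int.le_of_dvd one_pos h3
  omega

lemma sum_ep_linear (p : ℕ) [Fact p.Prime] (B : ZMod p) :
    ∑ u : ZMod p, ep p (B * u) = if B = 0 then (p : ℂ) else 0 := by
  split_ifs with hB
  · simp [hB, ep_zero, ZMod.card]
  · have h1 : ∑ u : ZMod p, ep p (B * u) = ∑ u : ZMod p, ep p u :=
      Fintype.sum_bijective (fun u => B * u) (mulLeft_bijective₀ B hB) _ _ (fun u => rfl)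
    rw [h1]
    have h2 : ep p 1 * ∑ u : ZMod p, ep p u = ∑ u : ZMod p, ep p u := by
      rw [Finset.mul_sum]
      rw [show (∑ u : ZMod p, ep p 1 * ep p u) = ∑ u : ZMod p, ep p (1 + u) by
        simp [ep_add]]
      exact Fintype.sum_bijective (fun u => 1 + u) (Equiv.addLeft (1 : ZMod p)).bijective
        _ _ (fun u => rfl)
    by_contra hS
    exact ep_one_ne_one p (mul_right_cancel₀ hS (by rw [h2, one_mul]))

lemma K1_inner_sum (p : ℕ) [Fact p.Prime] (x₁ x₂ x₃ : ZMod p) (hx2 : x₂ = -x₃)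
    (y₂ y₃ : ZMod p) :
    (∑ y₁ : ZMod p, ep p (x₁ * y₁ ^ 2 - x₂ * y₂ ^ 2 - x₃ * y₃ ^ 2 +
      (x₃ + x₂ - x₁) * (y₂ + y₃ - y₁) ^ 2 + (x₂ - x₁) * (y₁ - y₃)))
    = ep p ((x₁ - x₃) * y₃^2 + (x₃ - x₁) * y₂^2) *
      (if 2*x₁*y₂ + 2*x₁*y₃ + x₂ - x₁ = 0 then (p : ℂ) else 0) := by
  rw [show (∑ y₁ : ZMod p, ep p (x₁ * y₁ ^ 2 - x₂ * y₂ ^ 2 - x₃ * y₃ ^ 2 +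
      (x₃ + x₂ - x₁) * (y₂ + y₃ - y₁) ^ 2 + (x₂ - x₁) * (y₁ - y₃)))
    = ∑ u : ZMod p, ep p (x₁ * (y₃ + u) ^ 2 - x₂ * y₂ ^ 2 - x₃ * y₃ ^ 2 +
      (x₃ + x₂ - x₁) * (y₂ + y₃ - (y₃ + u)) ^ 2 + (x₂ - x₁) * ((y₃ + u) - y₃)) from
    (Fintype.sum_equiv (Equiv.addLeft y₃) _ _ (fun u => rfl)).symm]
  have step : ∀ u : ZMod p, (x₁ * (y₃ + u) ^ 2 - x₂ * y₂ ^ 2 - x₃ * y₃ ^ 2 +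
      (x₃ + x₂ - x₁) * (y₂ + y₃ - (y₃ + u)) ^ 2 + (x₂ - x₁) * ((y₃ + u) - y₃))
      = ((x₁ - x₃) * y₃^2 + (x₃ - x₁) * y₂^2) + (2*x₁*y₂ + 2*x₁*y₃ + x₂ - x₁) * u := by
    intro u; subst hx2; ring
  simp_rw [step, ep_add, ← Finset.mul_sum, sum_ep_linear]

theorem K1_bound_of_sum_zero (p : ℕ) [Fact p.Prime] (hodd : Odd p)
    (x₁ x₂ x₃ : ZMod p) (h : x₃ + x₂ = 0) (hne : x₃ ≠ x₁) :
    ‖K1 p x₁ x₂ x₃‖ ≤ (p : ℝ)⁻¹ := by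
  have hp : p.Prime := Fact.out
  have hp0 : (0 : ℝ) < p := by exact_mod_cast hp.pos
  have hx2 : x₂ = -x₃ := by linear_combination h
  have h2Z : (2 : ZMod p) ≠ 0 := by
    intro hc
    have hdvd : (p : ℕ) ∣ 2 := (ZMod.natCast_eq_zero_iff 2 p).mp (by exact_mod_cast hc)
    have hle := Nat.le_of_dvd (by norm_num) hdvd
    have := hp.two_le
    have hp2 : p = 2 := by omega
    rw [hp2, Nat.odd_iff] at hodd
    omega
  have inner_bound : ∀ y₂ : ZMod p,
      (∑ y₃ : ZMod p, if 2*x₁*y₂ + 2*x₁*y₃ + x₂ - x₁ = 0 then (p : ℝ) else 0) ≤ p := by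
    intro y₂
    by_cases hx1 : x₁ = 0
    · have hne' : ∀ y₃ : ZMod p, 2*x₁*y₂ + 2*x₁*y₃ + x₂ - x₁ ≠ 0 := by
        intro y₃ hc
        apply hne
        rw [hx1]
        rw [hx1] at hc
        have hx20 : x₂ = 0 := by linear_combination hc
        rw [hx20] at hx2
        linear_combination hx2
      simp only [hne', if_false, Finset.sum_const_zero]
      positivity
    · have h2x : (2 * x₁ : ZMod p) ≠ 0 := mul_ne_zero h2Z hx1
      have hiff : ∀ y₃ : ZMod p, (2*x₁*y₂ + 2*x₁*y₃ + x₂ - x₁ = 0)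
          ↔ y₃ = (2*x₁)⁻¹ * (x₁ - x₂ - 2*x₁*y₂) := by
        intro y₃
        constructor
        · intro hc
          apply mul_left_cancel₀ h2x
          rw [mul_inv_cancel_left₀ h2x]
          linear_combination hc
        · intro hc
          rw [hc, mul_inv_cancel_left₀ h2x]
          ring
      simp_rw [hiff]
      rw [Finset.sum_ite_eq' Finset.univ _ (fun _ => (p : ℝ))]
      simp
  have Sbound : ‖(∑ y₁ : ZMod p, ∑ y₂ : ZMod p, ∑ y₃ : ZMod p,
      ep p (x₁ * y₁ ^ 2 - x₂ * y₂ ^ 2 - x₃ * y₃ ^ 2 +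
        (x₃ + x₂ - x₁) * (y₂ + y₃ - y₁) ^ 2 + (x₂ - x₁) * (y₁ - y₃)))‖ ≤ (p : ℝ)^2 := by
    rw [show (∑ y₁ : ZMod p, ∑ y₂ : ZMod p, ∑ y₃ : ZMod p,
        ep p (x₁ * y₁ ^ 2 - x₂ * y₂ ^ 2 - x₃ * y₃ ^ 2 +
          (x₃ + x₂ - x₁) * (y₂ + y₃ - y₁) ^ 2 + (x₂ - x₁) * (y₁ - y₃)))
      = ∑ y₂ : ZMod p, ∑ y₃ : ZMod p, ∑ y₁ : ZMod p,
        ep p (x₁ * y₁ ^ 2 - x₂ * y₂ ^ 2 - x₃ * y₃ ^ 2 +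
          (x₃ + x₂ - x₁) * (y₂ + y₃ - y₁) ^ 2 + (x₂ - x₁) * (y₁ - y₃)) by
      rw [Finset.sum_comm]
      exact Finset.sum_congr rfl fun y₂ _ => Finset.sum_comm]
    calc ‖(∑ y₂ : ZMod p, ∑ y₃ : ZMod p, ∑ y₁ : ZMod p,
          ep p (x₁ * y₁ ^ 2 - x₂ * y₂ ^ 2 - x₃ * y₃ ^ 2 +
            (x₃ + x₂ - x₁) * (y₂ + y₃ - y₁) ^ 2 + (x₂ - x₁) * (y₁ - y₃)))‖
        ≤ ∑ y₂ : ZMod p, ∑ y₃ : ZMod p, ‖(∑ y₁ : ZMod p,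
            ep p (x₁ * y₁ ^ 2 - x₂ * y₂ ^ 2 - x₃ * y₃ ^ 2 +
              (x₃ + x₂ - x₁) * (y₂ + y₃ - y₁) ^ 2 + (x₂ - x₁) * (y₁ - y₃)))‖ :=
          le_trans (norm_sum_le _ _)
            (Finset.sum_le_sum fun y₂ _ => norm_sum_le _ _)
      _ = ∑ y₂ : ZMod p, ∑ y₃ : ZMod p,
            (if 2*x₁*y₂ + 2*x₁*y₃ + x₂ - x₁ = 0 then (p : ℝ) else 0) := by
          refine Finset.sum_congr rfl fun y₂ _ => Finset.sum_congr rfl fun y₃ _ => ?_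
          rw [K1_inner_sum p x₁ x₂ x₃ hx2 y₂ y₃, norm_mul, abs_ep, one_mul,
            apply_ite (fun z : ℂ => ‖z‖), norm_zero, Complex.norm_natCast]
      _ ≤ ∑ _y₂ : ZMod p, (p : ℝ) := Finset.sum_le_sum fun y₂ _ => inner_bound y₂
      _ = (p : ℝ)^2 := by
          rw [Finset.sum_const, Finset.card_univ, ZMod.card, nsmul_eq_mul]; ring
  rw [K1, norm_mul, norm_inv, norm_pow, Complex.norm_natCast]
  calc ((p:ℝ)^3)⁻¹ * ‖(∑ y₁ : ZMod p, ∑ y₂ : ZMod p, ∑ y₃ : ZMod p,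
        ep p (x₁ * y₁ ^ 2 - x₂ * y₂ ^ 2 - x₃ * y₃ ^ 2 +
          (x₃ + x₂ - x₁) * (y₂ + y₃ - y₁) ^ 2 + (x₂ - x₁) * (y₁ - y₃)))‖
      ≤ ((p:ℝ)^3)⁻¹ * (p:ℝ)^2 := mul_le_mul_of_nonneg_left Sbound (by positivity)
    _ = (p:ℝ)⁻¹ := by field_simp
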